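/- For finitely supported probability measures given by finite sets: for nonempty finite subsets F, F' of a group G and g ∈ G, define m = |F|⁻¹·1_F and m' = |F'|⁻¹·1_{F'} in ℓ¹(G), and let (g.m)(h) = m(hg). Then ‖g.m − m'‖₁ ≤ 2·|F·g⁻¹ \ F'| / |F| + 2·|F' \ F·g⁻¹| / |F'|. -/

import Mathlib

/-- ℓ¹-estimate for normalized characteristic measures. For nonempty
finite subsets `F, F'` of a group `G` and `g ∈ G`, with `m = |F|⁻¹·1_F`,
`m' = |F'|⁻¹·1_{F'}` and `(g.m)(h) = m(hg)`, one has
`‖g.m − m'‖₁ ≤ 2·|F·g⁻¹ \ F'|/|F| + 2·|F' \ F·g⁻¹|/|F'|`. -/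
theorem stmt5 {G : Type} [Group G] [DecidableEq G] (F F' : Finset G)
    (hF : F.Nonempty) (hF' : F'.Nonempty) (g : G) :
    ∑' h : G,
        |(if h * g ∈ F then ((F.card : ℝ))⁻¹ else 0) -
          (if h ∈ F' then ((F'.card : ℝ))⁻¹ else 0)|
      ≤ 2 * (((F.image (· * g⁻¹)) \ F').card : ℝ) / F.card
        + 2 * ((F' \ (F.image (· * g⁻¹))).card : ℝ) / F'.card := by
  classical
  set A := F.image (· * g⁻¹) with hA
  have hmem : ∀ h : G, h * g ∈ F ↔ h ∈ A := by
    intro h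
    constructor
    · intro hf
      exact Finset.mem_image.mpr ⟨h * g, hf, by group⟩
    · intro hf
      obtain ⟨x, hx, rfl⟩ := Finset.mem_image.mp hf
      simpa using hx
  set a : ℝ := (F.card : ℝ) with ha'
  set b : ℝ := (F'.card : ℝ) with hb'
  have ha : 0 < a := by
    simp only [ha']
    exact_mod_cast Finset.card_pos.mpr hF
  have hb : 0 < b := by
    simp only [hb']
    exact_mod_cast Finset.card_pos.mpr hF'
  set f : G → ℝ := fun h =>
    |(if h ∈ A then a⁻¹ else 0) - (if h ∈ F' then b⁻¹ else 0)| with hf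
  have hfun : (fun h : G =>
      |(if h * g ∈ F then a⁻¹ else 0) - (if h ∈ F' then b⁻¹ else 0)|) = f := by
    funext h
    simp only [hf, hmem h]
  rw [hfun]
  have hzero : ∀ h ∉ A ∪ F', f h = 0 := by
    intro h hh
    simp only [Finset.mem_union, not_or] at hh
    simp [hf, hh.1, hh.2]
  rw [tsum_eq_sum hzero]
  -- split the union
  have hsplit : A ∪ F' = (A \ F') ∪ ((F' \ A) ∪ (A ∩ F')) := by
    ext x
    simp only [Finset.mem_union, Finset.mem_sdiff, Finset.mem_inter]
    tauto
  have hd1 : Disjoint (A \ F') ((F' \ A) ∪ (A ∩ F')) := by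
    rw [Finset.disjoint_left]
    intro x hx hx'
    simp only [Finset.mem_sdiff] at hx
    simp only [Finset.mem_union, Finset.mem_sdiff, Finset.mem_inter] at hx'
    tauto
  have hd2 : Disjoint (F' \ A) (A ∩ F') := by
    rw [Finset.disjoint_left]
    intro x hx hx'
    simp only [Finset.mem_sdiff] at hx
    simp only [Finset.mem_inter] at hx'
    tauto
  rw [hsplit, Finset.sum_union hd1, Finset.sum_union hd2]
  have s1 : ∑ h ∈ A \ F', f h = ((A \ F').card : ℝ) * a⁻¹ := by
    rw [Finset.sum_congr rfl (fun h hh => ?_), Finset.sum_const, nsmul_eq_mul]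
    simp only [Finset.mem_sdiff] at hh
    simp [hf, hh.1, hh.2, abs_of_nonneg (inv_nonneg.mpr ha.le)]
  have s2 : ∑ h ∈ F' \ A, f h = ((F' \ A).card : ℝ) * b⁻¹ := by
    rw [Finset.sum_congr rfl (fun h hh => ?_), Finset.sum_const, nsmul_eq_mul]
    simp only [Finset.mem_sdiff] at hh
    simp [hf, hh.1, hh.2, abs_of_nonneg (inv_nonneg.mpr hb.le)]
  have s3 : ∑ h ∈ A ∩ F', f h = ((A ∩ F').card : ℝ) * |a⁻¹ - b⁻¹| := by
    rw [Finset.sum_congr rfl (fun h hh => ?_), Finset.sum_const, nsmul_eq_mul]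
    simp only [Finset.mem_inter] at hh
    simp [hf, hh.1, hh.2]
  rw [s1, s2, s3]
  set x : ℝ := ((A \ F').card : ℝ) with hx'
  set y : ℝ := ((F' \ A).card : ℝ) with hy'
  set c : ℝ := ((A ∩ F').card : ℝ) with hc'
  have hcardA : (A.card : ℝ) = a := by
    simp only [ha', hA]
    exact_mod_cast congrArg Nat.cast
      (Finset.card_image_of_injective F (mul_left_injective g⁻¹))
  have hax : a = x + c := by
    rw [← hcardA, hx', hc']
    exact_mod_cast congrArg Nat.cast (Finset.card_sdiff_add_card_inter A F').symm
  have hby : b = y + c := by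
    have : (F' \ A).card + (F' ∩ A).card = F'.card :=
      Finset.card_sdiff_add_card_inter F' A
    rw [Finset.inter_comm] at this
    rw [hb', hy', hc']
    exact_mod_cast this.symm
  have hx0 : 0 ≤ x := by positivity
  have hy0 : 0 ≤ y := by positivity
  have hc0 : 0 ≤ c := by positivity
  clear_value a b x y c
  clear hf hfun hzero hsplit hd1 hd2 s1 s2 s3 hmem f A hA hcardA hx' hy' hc' ha' hb' hF hF' g F F'
  have key : c * |a⁻¹ - b⁻¹| ≤ x * a⁻¹ + y * b⁻¹ := by
    have habs : |a⁻¹ - b⁻¹| = |b - a| / (a * b) := by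
      rw [← abs_of_pos (mul_pos ha hb), ← abs_div]
      congr 1
      field_simp
    rw [habs, div_eq_mul_inv, ← mul_assoc]
    have hca : c ≤ a := by linarith
    have hcb : c ≤ b := by linarith
    have t1 : 0 ≤ x * a⁻¹ := by positivity
    have t2 : 0 ≤ y * b⁻¹ := by positivity
    rcases le_or_gt a b with hab | hab
    · rw [abs_of_nonneg (by linarith : (0:ℝ) ≤ b - a)]
      have hstep : c * (b - a) ≤ a * y := by nlinarith [mul_le_mul_of_nonneg_right hca hy0, mul_nonneg hc0 hx0]
      have : c * (b - a) * (a * b)⁻¹ ≤ a * y * (a * b)⁻¹ :=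
        mul_le_mul_of_nonneg_right hstep (by positivity)
      have heq : a * y * (a * b)⁻¹ = y * b⁻¹ := by field_simp
      rw [heq] at this
      linarith
    · rw [abs_of_neg (by linarith : b - a < 0)]
      have hstep : c * -(b - a) ≤ b * x := by nlinarith [mul_le_mul_of_nonneg_right hcb hx0, mul_nonneg hc0 hy0]
      have : c * -(b - a) * (a * b)⁻¹ ≤ b * x * (a * b)⁻¹ :=
        mul_le_mul_of_nonneg_right hstep (by positivity)
      have heq : b * x * (a * b)⁻¹ = x * a⁻¹ := by field_simp
      rw [heq] at this
      linarith
  have goal_rw : 2 * x / a + 2 * y / b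
      = x * a⁻¹ + (y * b⁻¹ + (x * a⁻¹ + y * b⁻¹)) := by
    rw [div_eq_mul_inv, div_eq_mul_inv]
    ring
  rw [goal_rw]
  linarith
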